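/- Every two-cocycle on the Witt algebra with values in ℂ is cohomologous to a scalar multiple of the Virasoro cocycle γ(l_n, l_m) = (1/12)(n³ − n) δ_{n+m,0}; that is, H²(W, ℂ) is one-dimensional. -/

import Mathlib

noncomputable def wittBracket : (ℤ →₀ ℂ) →ₗ[ℂ] (ℤ →₀ ℂ) →ₗ[ℂ] (ℤ →₀ ℂ) :=
  Finsupp.lsum ℂ fun n =>
    LinearMap.toSpanSingleton ℂ ((ℤ →₀ ℂ) →ₗ[ℂ] (ℤ →₀ ℂ))
      (Finsupp.lsum ℂ fun m => ((m : ℂ) - (n : ℂ)) • Finsupp.lsingle (n + m))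

noncomputable def virasoroCocycle : (ℤ →₀ ℂ) →ₗ[ℂ] (ℤ →₀ ℂ) →ₗ[ℂ] ℂ :=
  Finsupp.lsum ℂ fun n =>
    LinearMap.toSpanSingleton ℂ ((ℤ →₀ ℂ) →ₗ[ℂ] ℂ)
      (Finsupp.lsum ℂ fun m =>
        LinearMap.toSpanSingleton ℂ ℂ
          (if n + m = 0 then ((n : ℂ) ^ 3 - (n : ℂ)) / 12 else 0))

namespace WittAux

noncomputable abbrev wl (n : ℤ) : ℤ →₀ ℂ := Finsupp.single n 1

lemma wittBracket_single (n m : ℤ) :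
    wittBracket (wl n) (wl m) = ((m : ℂ) - n) • wl (n + m) := by
  rw [wittBracket, Finsupp.lsum_single, LinearMap.toSpanSingleton_apply, one_smul,
    Finsupp.lsum_single]
  simp [Finsupp.lsingle_apply]

lemma virasoro_single (n m : ℤ) :
    virasoroCocycle (wl n) (wl m) = if n + m = 0 then ((n:ℂ)^3 - n)/12 else 0 := by
  rw [virasoroCocycle, Finsupp.lsum_single, LinearMap.toSpanSingleton_apply, one_smul,
    Finsupp.lsum_single, LinearMap.toSpanSingleton_apply, one_smul]

section
variable (γ : (ℤ →₀ ℂ) →ₗ[ℂ] (ℤ →₀ ℂ) →ₗ[ℂ] ℂ)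

/-- value on basis -/
noncomputable def f (n m : ℤ) : ℂ := γ (wl n) (wl m)

variable (hskew : ∀ a b : ℤ →₀ ℂ, γ a b = - γ b a)
variable (hcoc : ∀ a b c : ℤ →₀ ℂ,
      γ (wittBracket a b) c + γ (wittBracket b c) a + γ (wittBracket c a) b = 0)

include hskew in
lemma f_skew (n m : ℤ) : f γ n m = - f γ m n := hskew _ _

include hcoc in
lemma coc_basis (n m k : ℤ) :
    ((m:ℂ) - n) * f γ (n+m) k + ((k:ℂ) - m) * f γ (m+k) n + ((n:ℂ) - k) * f γ (k+n) m = 0 := by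
  have H := hcoc (wl n) (wl m) (wl k)
  rw [wittBracket_single, wittBracket_single, wittBracket_single] at H
  simpa only [f, map_smul, LinearMap.smul_apply, smul_eq_mul] using H

/-- the map defining the coboundary -/
noncomputable def p (n : ℤ) : ℂ := if n = 0 then -(f γ 1 (-1))/2 else f γ 0 n / n

noncomputable def φmap : (ℤ →₀ ℂ) →ₗ[ℂ] ℂ :=
  Finsupp.lsum ℂ fun n => LinearMap.toSpanSingleton ℂ ℂ (p γ n)

lemma φmap_single (n : ℤ) : φmap γ (wl n) = p γ n := by
  rw [φmap, Finsupp.lsum_single, LinearMap.toSpanSingleton_apply, one_smul]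

/-- the reduced diagonal part -/
noncomputable def g (n : ℤ) : ℂ := f γ n (-n) + 2 * n * p γ 0

include hskew in
lemma g_zero : g γ 0 = 0 := by
  have h := f_skew γ hskew 0 0
  simp only [g, neg_zero, Int.cast_zero, mul_zero, zero_mul, add_zero]
  linear_combination h / 2

lemma g_one : g γ 1 = 0 := by
  rw [g, p, if_pos rfl]
  push_cast
  ring

include hskew in
lemma g_odd (n : ℤ) : g γ (-n) = - g γ n := by
  have h := f_skew γ hskew (-n) n
  simp only [g, neg_neg, Int.cast_neg]
  rw [h]
  ring

include hskew hcoc in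
/-- vanishing of the adjusted cocycle off the antidiagonal -/
lemma f_off (n m : ℤ) (h : n + m ≠ 0) : f γ n m = ((m:ℂ) - n) * p γ (n + m) := by
  have H := coc_basis γ hcoc n m 0
  have hp : p γ (n + m) = f γ 0 (n + m) / (n + m) := by rw [p, if_neg h]; push_cast; ring
  have hnm : ((n:ℂ) + m) ≠ 0 := by
    have : ((n + m : ℤ) : ℂ) ≠ 0 := Int.cast_ne_zero.mpr h
    push_cast at this; exact this
  simp only [add_zero, zero_add, Int.cast_zero] at H
  rw [f_skew γ hskew m n, f_skew γ hskew (n + m) 0] at H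
  have key : ((n:ℂ)+m) * f γ n m = ((m:ℂ)-n) * f γ 0 (n+m) := by linear_combination H
  rw [hp]
  field_simp
  linear_combination key

include hskew hcoc in
/-- the recursion for `g` -/
lemma g_rec (n : ℤ) : ((1:ℂ) - n) * g γ (n+1) + ((n:ℂ) + 2) * g γ n = 0 := by
  have H := coc_basis γ hcoc n 1 (-(n+1))
  have h1 : (1 : ℤ) + -(n+1) = -n := by ring
  have h2 : -(n+1) + n = -1 := by ring
  rw [h1, h2] at H
  have e1 : f γ (n+1) (-(n+1)) = g γ (n+1) - 2 * ((n:ℂ)+1) * p γ 0 := by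
    simp only [g]; push_cast; ring
  have e2 : f γ (-n) n = - g γ n + 2 * (n:ℂ) * p γ 0 := by
    have := g_odd γ hskew n
    simp only [g, neg_neg] at this ⊢
    push_cast at this ⊢
    linear_combination this
  have e3 : f γ (-1) 1 = 2 * p γ 0 := by
    have h4 := g_odd γ hskew 1
    rw [g_one γ] at h4
    simp only [g, neg_neg] at h4
    push_cast at h4
    linear_combination h4
  rw [e1, e2, e3] at H
  push_cast at H
  linear_combination H

include hskew hcoc in
lemma g_formula (n : ℤ) : g γ n = g γ 2 / 6 * ((n:ℂ)^3 - n) := by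
  set c : ℂ := g γ 2 / 6 with hc
  have two : ∀ j : ℤ, 2 ≤ j → g γ j = c * ((j:ℂ)^3 - j) := by
    intro j hj
    refine Int.le_induction (motive := fun i _ => g γ i = c * ((i:ℂ)^3 - i)) ?_ ?_ j hj
    · rw [hc]; norm_num
    · intro j hj ih
      have hrec := g_rec γ hskew hcoc j
      have hne : ((1:ℂ) - j) ≠ 0 := by
        have h' : ((1 - j : ℤ) : ℂ) ≠ 0 := Int.cast_ne_zero.mpr (by omega)
        push_cast at h'; exact h'
      have hcalc : ((1:ℂ) - j) * g γ (j+1)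
          = ((1:ℂ) - j) * (c * (((j:ℂ)+1)^3 - ((j:ℂ)+1))) := by
        linear_combination hrec - ((j:ℂ) + 2) * ih
      have h2 := mul_left_cancel₀ hne hcalc
      push_cast
      linear_combination h2
  have key : ∀ k : ℤ, 0 ≤ k → g γ k = c * ((k:ℂ)^3 - k) := by
    intro k hk
    rcases (by omega : k = 0 ∨ k = 1 ∨ 2 ≤ k) with rfl | rfl | h2
    · rw [g_zero γ hskew]; norm_num
    · rw [g_one γ]; norm_num
    · exact two k h2
  rcases le_or_gt 0 n with h | h
  · exact key n h
  · have ho := g_odd γ hskew (-n)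
    rw [neg_neg] at ho
    rw [ho, key (-n) (by omega)]
    push_cast
    ring

end
end WittAux

theorem witt_two_cocycle_cohomologous_to_multiple_of_virasoro
    (γ : (ℤ →₀ ℂ) →ₗ[ℂ] (ℤ →₀ ℂ) →ₗ[ℂ] ℂ)
    (hskew : ∀ a b : ℤ →₀ ℂ, γ a b = - γ b a)
    (hcoc : ∀ a b c : ℤ →₀ ℂ,
      γ (wittBracket a b) c + γ (wittBracket b c) a + γ (wittBracket c a) b = 0) :
    ∃ (r : ℂ) (φ : (ℤ →₀ ℂ) →ₗ[ℂ] ℂ), ∀ a b : ℤ →₀ ℂ,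
      γ a b = r * virasoroCocycle a b + φ (wittBracket a b) := by
  classical
  refine ⟨2 * WittAux.g γ 2, WittAux.φmap γ, ?_⟩
  suffices h : γ = (2 * WittAux.g γ 2) • virasoroCocycle + wittBracket.compr₂ (WittAux.φmap γ) by
    intro a b
    conv_lhs => rw [h]
    simp [LinearMap.compr₂_apply, smul_eq_mul]
  ext n m
  simp only [LinearMap.comp_apply, Finsupp.lsingle_apply, LinearMap.add_apply,
    LinearMap.smul_apply, LinearMap.compr₂_apply, smul_eq_mul]
  show WittAux.f γ n m = _
  rw [WittAux.virasoro_single, WittAux.wittBracket_single, map_smul, WittAux.φmap_single,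
    smul_eq_mul]
  by_cases hnm : n + m = 0
  · rw [if_pos hnm]
    have hm : m = -n := by omega
    subst hm
    rw [show n + -n = 0 from by ring]
    have hg := WittAux.g_formula γ hskew hcoc n
    have hdef : WittAux.g γ n = WittAux.f γ n (-n) + 2 * n * WittAux.p γ 0 := rfl
    push_cast
    linear_combination hg - hdef
  · rw [if_neg hnm]
    rw [WittAux.f_off γ hskew hcoc n m hnm]
    ring
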